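/- The function S : (0,∞) × (0,∞) → ℝ defined by S(α, β) = 2(β − α)·√(α + β + 1)/((α + β + 2)·√(αβ)) is surjective onto ℝ. -/
import Mathlib

private lemma aux_18 (p : ℝ) (hp : p ≤ 0) :
    ∃ β : ℝ, 0 < β ∧ 2 * (β - 1) * Real.sqrt (β + 2) / ((β + 3) * Real.sqrt β) = p := by
  set g : ℝ → ℝ := fun x => 2 * (x - 1) * Real.sqrt (x + 2) / ((x + 3) * Real.sqrt x) with hg
  set a : ℝ := min (1/2) (1 / (16 * (1 - p)^2)) with ha
  have hp1 : (1:ℝ) ≤ 1 - p := by linarith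
  have ha0 : 0 < a := by
    apply lt_min (by norm_num)
    positivity
  have ha12 : a ≤ 1/2 := min_le_left _ _
  have ha1 : a ≤ 1 := by linarith
  -- continuity
  have hcont : ContinuousOn g (Set.Icc a 1) := by
    apply ContinuousOn.div
    · fun_prop
    · fun_prop
    · intro x hx
      have hx0 : 0 < x := lt_of_lt_of_le ha0 hx.1
      have : 0 < Real.sqrt x := Real.sqrt_pos.mpr hx0
      positivity
  -- value at 1
  have hg1 : g 1 = 0 := by simp [hg]
  -- value at a is ≤ p
  have hga : g a ≤ p := by
    have hs : Real.sqrt a ≤ 1 / (4 * (1 - p)) := by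
      have h1 : a ≤ (1 / (4 * (1 - p)))^2 := by
        have : (1 / (4 * (1 - p)))^2 = 1 / (16 * (1 - p)^2) := by
          field_simp; ring
        rw [this]; exact min_le_right _ _
      calc Real.sqrt a ≤ Real.sqrt ((1 / (4 * (1 - p)))^2) := Real.sqrt_le_sqrt h1
        _ = 1 / (4 * (1 - p)) := Real.sqrt_sq (by positivity)
    have hs0 : 0 < Real.sqrt a := Real.sqrt_pos.mpr ha0
    have ht1 : 1 ≤ Real.sqrt (a + 2) := by
      rw [show (1:ℝ) = Real.sqrt 1 by simp]
      exact Real.sqrt_le_sqrt (by linarith)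
    have hden : 0 < (a + 3) * Real.sqrt a := by positivity
    rw [hg, div_le_iff₀ hden]
    set s := Real.sqrt a
    set t := Real.sqrt (a + 2)
    have key1 : 2 * (a - 1) * t ≤ -1 := by nlinarith
    have h4 : s * (4 * (1 - p)) ≤ 1 := by
      rw [← le_div_iff₀ (by positivity)]; exact hs
    have key2 : (-1:ℝ) ≤ p * ((a + 3) * s) := by
      nlinarith [mul_nonneg (mul_nonneg (neg_nonneg.mpr hp) hs0.le)
        (by linarith : (0:ℝ) ≤ 1 - a), hs0.le]
    linarith
  -- IVT
  have hsub := intermediate_value_Icc ha1 hcont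
  have hpmem : p ∈ Set.Icc (g a) (g 1) := by
    rw [hg1]; exact ⟨hga, hp⟩
  obtain ⟨β, hβmem, hβ⟩ := hsub hpmem
  exact ⟨β, lt_of_lt_of_le ha0 hβmem.1, hβ⟩

theorem stmt_18 :
    ∀ p : ℝ, ∃ α β : ℝ, 0 < α ∧ 0 < β ∧
      2 * (β - α) * Real.sqrt (α + β + 1) / ((α + β + 2) * Real.sqrt (α * β)) = p := by
  intro p
  rcases le_or_gt p 0 with hp | hp
  · obtain ⟨β, hβ0, hβ⟩ := aux_18 p hp
    refine ⟨1, β, one_pos, hβ0, ?_⟩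
    rw [show (1:ℝ) + β + 1 = β + 2 by ring, show (1:ℝ) * β = β by ring,
      show (1:ℝ) + β + 2 = β + 3 by ring]
    exact hβ
  · obtain ⟨β, hβ0, hβ⟩ := aux_18 (-p) (by linarith)
    refine ⟨β, 1, hβ0, one_pos, ?_⟩
    rw [show β + 1 + 1 = β + 2 by ring, show β * 1 = β by ring,
      show β + 1 + 2 = β + 3 by ring,
      show 2 * (1 - β) * Real.sqrt (β + 2) = -(2 * (β - 1) * Real.sqrt (β + 2)) by ring,
      neg_div, hβ, neg_neg]
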